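/- Let Y be a variable. For every positive integer n: det_{0≤i,j≤n−1}( Y + 2^{−2⌈(i+j)/2⌉} · binom(2⌈(i+j)/2⌉, ⌈(i+j)/2⌉) ) = 2^{−n(n−1)} (Y·n + 1). -/

import Mathlib

open Finset

/-- Entries of the triangular factor: coefficients related to Chebyshev polynomials
of the third kind / ballot numbers. -/
noncomputable def bb (i k : ℕ) : ℚ :=
  if i ≤ k then (Nat.choose k ((k - i) / 2) : ℚ) / 2 ^ k else 0

lemma bb_eq_zero {i k : ℕ} (h : k < i) : bb i k = 0 := by
  simp [bb, Nat.not_le.2 h]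

lemma bb_apply {i k : ℕ} (h : i ≤ k) :
    bb i k = (Nat.choose k ((k - i) / 2) : ℚ) / 2 ^ k := if_pos h

lemma bb_diag (i : ℕ) : bb i i = ((2 : ℚ) ^ i)⁻¹ := by
  rw [bb_apply le_rfl]
  simp

/-- Three-term recurrence, row `0`. -/
lemma bb_rec0 (k : ℕ) : bb 0 (k + 1) = (bb 1 k + bb 0 k) / 2 := by
  rcases Nat.eq_zero_or_pos k with rfl | hk
  · norm_num [bb_apply, bb_eq_zero]
  obtain ⟨k', rfl⟩ : ∃ k', k = k' + 1 := ⟨k - 1, by omega⟩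
  rw [bb_apply (by omega), bb_apply (by omega), bb_apply (by omega)]
  have h1 : (k' + 1 + 1 - 0) / 2 = k' / 2 + 1 := by omega
  have h2 : (k' + 1 - 1) / 2 = k' / 2 := by omega
  rw [h1, h2]
  have hpascal : Nat.choose (k' + 2) (k' / 2 + 1)
      = Nat.choose (k' + 1) (k' / 2) + Nat.choose (k' + 1) (k' / 2 + 1) :=
    Nat.choose_succ_succ _ _
  have hsym : Nat.choose (k' + 1) (k' / 2 + 1) = Nat.choose (k' + 1) ((k' + 1 - 0) / 2) := by
    rcases Nat.even_or_odd k' with ⟨t, rfl⟩ | ⟨t, rfl⟩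
    · have e1 : t + t = 2 * t := by ring
      have e2 : (t + t) / 2 + 1 = t + 1 := by omega
      have e3 : (t + t + 1 - 0) / 2 = t := by omega
      rw [e2, e3, e1, Nat.choose_symm_half]
    · have e2 : (2 * t + 1) / 2 + 1 = t + 1 := by omega
      have e3 : (2 * t + 1 + 1 - 0) / 2 = t + 1 := by omega
      rw [e2, e3]
  rw [hpascal, hsym]
  push_cast
  ring

/-- Three-term recurrence, rows `≥ 1`. -/
lemma bb_recS (i k : ℕ) : bb (i + 1) (k + 1) = (bb (i + 2) k + bb i k) / 2 := by
  rcases Nat.lt_or_ge k i with h | h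
  · rw [bb_eq_zero (by omega), bb_eq_zero (by omega), bb_eq_zero (by omega)]
    norm_num
  obtain ⟨d, rfl⟩ : ∃ d, k = i + d := ⟨k - i, by omega⟩
  rcases Nat.eq_zero_or_pos d with rfl | hd
  · -- k = i
    rw [bb_apply (by omega), bb_eq_zero (by omega), bb_apply (show i ≤ i + 0 by omega)]
    have e1 : (i + 0 + 1 - (i + 1)) / 2 = 0 := by omega
    have e2 : (i + 0 - i) / 2 = 0 := by omega
    rw [e1, e2]
    simp [pow_succ]
    ring
  obtain ⟨d', rfl⟩ : ∃ d', d = d' + 1 := ⟨d - 1, by omega⟩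
  rcases Nat.eq_zero_or_pos d' with rfl | hd'
  · -- k = i + 1
    rw [bb_apply (by omega), bb_eq_zero (by omega), bb_apply (by omega)]
    have e1 : (i + (0 + 1) + 1 - (i + 1)) / 2 = 0 := by omega
    have e2 : (i + (0 + 1) - i) / 2 = 0 := by omega
    rw [e1, e2]
    simp [pow_succ]
    ring
  obtain ⟨e, rfl⟩ : ∃ e, d' = e + 1 := ⟨d' - 1, by omega⟩
  -- k = i + e + 2
  rw [bb_apply (by omega), bb_apply (by omega), bb_apply (by omega)]
  have e1 : (i + (e + 1 + 1) + 1 - (i + 1)) / 2 = e / 2 + 1 := by omega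
  have e2 : (i + (e + 1 + 1) - (i + 2)) / 2 = e / 2 := by omega
  have e3 : (i + (e + 1 + 1) - i) / 2 = e / 2 + 1 := by omega
  rw [e1, e2, e3]
  have e4 : i + (e + 1 + 1) + 1 = (i + (e + 1 + 1)) + 1 := rfl
  have hpascal : Nat.choose (i + (e + 1 + 1) + 1) (e / 2 + 1)
      = Nat.choose (i + (e + 1 + 1)) (e / 2) + Nat.choose (i + (e + 1 + 1)) (e / 2 + 1) :=
    Nat.choose_succ_succ _ _
  rw [hpascal]
  push_cast
  ring

/-- `bb 0 m` equals the moment appearing in the determinant. -/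
lemma bb0_eq (m : ℕ) :
    bb 0 m = (2 : ℚ) ^ (-(2 * (((m + 1) / 2 : ℕ) : ℤ))) *
      (Nat.choose (2 * ((m + 1) / 2)) ((m + 1) / 2) : ℚ) := by
  rcases Nat.even_or_odd m with ⟨t, rfl⟩ | ⟨t, rfl⟩
  · have e1 : (t + t + 1) / 2 = t := by omega
    have e2 : (t + t - 0) / 2 = t := by omega
    rw [bb_apply (by omega), e1, e2]
    have e3 : (2 : ℚ) ^ (-(2 * (t : ℤ))) = ((2 : ℚ) ^ (t + t))⁻¹ := by
      rw [zpow_neg]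
      congr 1
      rw [show (2 * (t : ℤ)) = ((t + t : ℕ) : ℤ) by push_cast; ring, zpow_natCast]
    rw [e3, show 2 * t = t + t by ring]
    ring
  · have e1 : (2 * t + 1 + 1) / 2 = t + 1 := by omega
    have e2 : (2 * t + 1 - 0) / 2 = t := by omega
    rw [bb_apply (by omega), e1, e2]
    have hch : Nat.choose (2 * (t + 1)) (t + 1) = 2 * Nat.choose (2 * t + 1) t := by
      have h1 : Nat.choose (2 * t + 1 + 1) (t + 1)
          = Nat.choose (2 * t + 1) t + Nat.choose (2 * t + 1) (t + 1) :=
        Nat.choose_succ_succ _ _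
      rw [show 2 * (t + 1) = 2 * t + 1 + 1 by ring, h1, Nat.choose_symm_half]
      ring
    have e3 : (2 : ℚ) ^ (-(2 * (((t + 1 : ℕ)) : ℤ))) = ((2 : ℚ) ^ (2 * t + 2))⁻¹ := by
      rw [zpow_neg]
      congr 1
    rw [hch, e3]
    push_cast
    rw [show 2 * t + 2 = (2 * t + 1) + 1 by ring, pow_succ]
    have h2 : (2 : ℚ) ^ (2 * t + 1) ≠ 0 := by positivity
    field_simp
    ring

/-- Column sums of `bb` are all `1`. -/
lemma bb_sum_one : ∀ k N : ℕ, k < N → ∑ i ∈ range N, bb i k = 1 := by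
  intro k
  induction k with
  | zero =>
    intro N hN
    rw [Finset.sum_eq_single 0]
    · simp [bb]
    · intro i _ hi
      exact bb_eq_zero (by omega)
    · intro h
      exact absurd (Finset.mem_range.2 hN) h
  | succ k ih =>
    intro N hN
    obtain ⟨N', rfl⟩ : ∃ N', N = N' + 1 := ⟨N - 1, by omega⟩
    have hk : k < N' := by omega
    have h1 : ∑ i ∈ range (N' + 1), bb i k = 1 := ih _ (by omega)
    have e1 : ∑ i ∈ range N', bb i k = 1 := by
      rw [Finset.sum_range_succ] at h1
      rwa [bb_eq_zero hk, add_zero] at h1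
    have e2 : ∑ i ∈ range N', bb (i + 2) k = 1 - bb 1 k - bb 0 k := by
      have h2 : ∑ i ∈ range (N' + 2), bb i k = 1 := by
        rw [Finset.sum_range_succ, bb_eq_zero (by omega), add_zero]
        exact h1
      rw [Finset.sum_range_succ' (fun i => bb i k) (N' + 1),
        Finset.sum_range_succ' (fun i => bb (i + 1) k) N'] at h2
      linarith
    calc ∑ i ∈ range (N' + 1), bb i (k + 1)
        = (∑ i ∈ range N', bb (i + 1) (k + 1)) + bb 0 (k + 1) :=
          Finset.sum_range_succ' _ _
      _ = (∑ i ∈ range N', (bb (i + 2) k + bb i k) / 2) + (bb 1 k + bb 0 k) / 2 := by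
          rw [bb_rec0]
          congr 1
          exact Finset.sum_congr rfl fun i _ => bb_recS i k
      _ = ((∑ i ∈ range N', bb (i + 2) k) + ∑ i ∈ range N', bb i k) / 2
            + (bb 1 k + bb 0 k) / 2 := by
          rw [← Finset.sum_add_distrib, ← Finset.sum_div]
      _ = 1 := by rw [e1, e2]; ring

/-- Exchange lemma for the quadratic sums. -/
lemma bb_exchange (k l N' : ℕ) (h : k + l ≤ 2 * N') :
    ∑ i ∈ range (N' + 1), bb i (k + 1) * bb i l
      = ∑ i ∈ range (N' + 1), bb i k * bb i (l + 1) := by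
  have hz1 : bb N' k * bb (N' + 1) l = 0 := by
    rcases le_or_gt (N' + 1) l with h' | h'
    · rw [bb_eq_zero (show k < N' by omega), zero_mul]
    · rw [bb_eq_zero h', mul_zero]
  have hz2 : bb (N' + 1) k * bb N' l = 0 := by
    rcases le_or_gt (N' + 1) k with h' | h'
    · rw [bb_eq_zero (show l < N' by omega), mul_zero]
    · rw [bb_eq_zero h', zero_mul]
  have hP : ∑ i ∈ range (N' + 1), bb (i + 1) k * bb i l
      = (∑ i ∈ range N', bb (i + 2) k * bb (i + 1) l) + bb 1 k * bb 0 l :=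
    Finset.sum_range_succ' (fun i => bb (i + 1) k * bb i l) N'
  have hP' : ∑ i ∈ range (N' + 1), bb (i + 1) k * bb i l
      = (∑ i ∈ range N', bb (i + 1) k * bb i l) + bb (N' + 1) k * bb N' l :=
    Finset.sum_range_succ _ _
  have hQ : ∑ i ∈ range (N' + 1), bb i k * bb (i + 1) l
      = (∑ i ∈ range N', bb (i + 1) k * bb (i + 2) l) + bb 0 k * bb 1 l :=
    Finset.sum_range_succ' (fun i => bb i k * bb (i + 1) l) N'
  have hQ' : ∑ i ∈ range (N' + 1), bb i k * bb (i + 1) l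
      = (∑ i ∈ range N', bb i k * bb (i + 1) l) + bb N' k * bb (N' + 1) l :=
    Finset.sum_range_succ _ _
  have hL : ∑ i ∈ range (N' + 1), bb i (k + 1) * bb i l
      = ((∑ i ∈ range N', bb (i + 2) k * bb (i + 1) l)
          + (∑ i ∈ range N', bb i k * bb (i + 1) l)) / 2
        + (bb 1 k * bb 0 l + bb 0 k * bb 0 l) / 2 := by
    rw [Finset.sum_range_succ' (fun i => bb i (k + 1) * bb i l) N']
    rw [bb_rec0]
    have : ∀ i ∈ range N', bb (i + 1) (k + 1) * bb (i + 1) l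
        = (bb (i + 2) k * bb (i + 1) l + bb i k * bb (i + 1) l) / 2 := by
      intro i _
      rw [bb_recS]
      ring
    rw [Finset.sum_congr rfl this, ← Finset.sum_div, Finset.sum_add_distrib]
    ring
  have hR : ∑ i ∈ range (N' + 1), bb i k * bb i (l + 1)
      = ((∑ i ∈ range N', bb (i + 1) k * bb (i + 2) l)
          + (∑ i ∈ range N', bb (i + 1) k * bb i l)) / 2
        + (bb 0 k * bb 1 l + bb 0 k * bb 0 l) / 2 := by
    rw [Finset.sum_range_succ' (fun i => bb i k * bb i (l + 1)) N']
    rw [bb_rec0]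
    have : ∀ i ∈ range N', bb (i + 1) k * bb (i + 1) (l + 1)
        = (bb (i + 1) k * bb (i + 2) l + bb (i + 1) k * bb i l) / 2 := by
      intro i _
      rw [bb_recS]
      ring
    rw [Finset.sum_congr rfl this, ← Finset.sum_div, Finset.sum_add_distrib]
    ring
  rw [hL, hR]
  linarith [hP, hP', hQ, hQ', hz1, hz2]

/-- The quadratic sums give back the moments. -/
lemma bb_sum_mul : ∀ k l N : ℕ, k + l + 2 ≤ 2 * N →
    ∑ i ∈ range N, bb i k * bb i l = bb 0 (k + l) := by
  intro k
  induction k with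
  | zero =>
    intro l N h
    rw [Finset.sum_eq_single 0]
    · simp [bb_apply (Nat.zero_le _)]
    · intro i _ hi
      rw [bb_eq_zero (by omega), zero_mul]
    · intro hmem
      exact absurd (Finset.mem_range.2 (by omega)) hmem
  | succ k ih =>
    intro l N h
    obtain ⟨N', rfl⟩ : ∃ N', N = N' + 1 := ⟨N - 1, by omega⟩
    rw [bb_exchange k l N' (by omega), ih (l + 1) (N' + 1) (by omega),
      show k + (l + 1) = k + 1 + l by ring]

open Matrix in
theorem hankel_det_central_binomial_plus_Y (Y : ℚ) (n : ℕ) (hn : 0 < n) :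
    det (of fun i j : Fin n =>
        Y + (2 : ℚ) ^ (-(2 * (((i.val + j.val + 1) / 2 : ℕ) : ℤ))) *
          (Nat.choose (2 * ((i.val + j.val + 1) / 2)) ((i.val + j.val + 1) / 2) : ℚ)) =
      (2 : ℚ) ^ (-((n * (n - 1) : ℕ) : ℤ)) * (Y * n + 1) := by
  classical
  set B : Matrix (Fin n) (Fin n) ℚ := Matrix.of (fun i k : Fin n => bb i.val k.val) with hB
  set A : Matrix (Fin n) (Fin n) ℚ :=
    (1 : Matrix (Fin n) (Fin n) ℚ)
      + Matrix.replicateCol Unit (fun _ => Y) * Matrix.replicateRow Unit (fun _ => (1 : ℚ)) with hA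
  have hAapply : ∀ i i' : Fin n, A i i' = (if i = i' then 1 else 0) + Y := by
    intro i i'
    simp [hA, Matrix.add_apply, Matrix.one_apply, Matrix.mul_apply]
  have key : (of fun i j : Fin n =>
        Y + (2 : ℚ) ^ (-(2 * (((i.val + j.val + 1) / 2 : ℕ) : ℤ))) *
          (Nat.choose (2 * ((i.val + j.val + 1) / 2)) ((i.val + j.val + 1) / 2) : ℚ))
      = Bᵀ * A * B := by
    ext k l
    have hk : (k : ℕ) < n := k.isLt
    have hl : (l : ℕ) < n := l.isLt
    have h1 : ∀ i' : Fin n, (Bᵀ * A) k i' = bb i' k + Y := by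
      intro i'
      rw [Matrix.mul_apply]
      have : ∀ i : Fin n, Bᵀ k i * A i i'
          = (if i' = i then bb i'.val k.val else 0) + bb i.val k.val * Y := by
        intro i
        rw [hAapply]
        rcases eq_or_ne i i' with rfl | hne
        · simp [hB, Matrix.transpose_apply]
          ring
        · simp [hB, Matrix.transpose_apply, hne, Ne.symm hne]
      rw [Finset.sum_congr rfl fun i _ => this i, Finset.sum_add_distrib,
        Finset.sum_ite_eq, ← Finset.sum_mul]
      have hT : ∑ i : Fin n, bb i.val k.val = 1 := by
        rw [Fin.sum_univ_eq_sum_range (fun i => bb i k.val) n]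
        exact bb_sum_one k.val n hk
      simp [hT]
    rw [Matrix.mul_apply, Finset.sum_congr rfl fun i' _ => by rw [h1 i']]
    have hsplit : ∑ i' : Fin n, (bb i'.val k.val + Y) * B i' l
        = (∑ i' : Fin n, bb i'.val k.val * bb i'.val l.val)
          + Y * ∑ i' : Fin n, bb i'.val l.val := by
      rw [Finset.mul_sum, ← Finset.sum_add_distrib]
      refine Finset.sum_congr rfl fun i' _ => ?_
      simp [hB]
      ring
    rw [hsplit]
    have hS : ∑ i' : Fin n, bb i'.val k.val * bb i'.val l.val = bb 0 (k.val + l.val) := by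
      rw [Fin.sum_univ_eq_sum_range (fun i => bb i k.val * bb i l.val) n]
      exact bb_sum_mul k.val l.val n (by omega)
    have hT : ∑ i' : Fin n, bb i'.val l.val = 1 := by
      rw [Fin.sum_univ_eq_sum_range (fun i => bb i l.val) n]
      exact bb_sum_one l.val n hl
    rw [hS, hT, Matrix.of_apply, bb0_eq (k.val + l.val)]
    ring
  rw [key, Matrix.det_mul, Matrix.det_mul, Matrix.det_transpose]
  have hdA : A.det = 1 + (n : ℚ) * Y := by
    rw [hA, Matrix.det_one_add_replicateCol_mul_replicateRow]
    simp [dotProduct, Finset.sum_const, nsmul_eq_mul]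
  have hdB : B.det = ((2 : ℚ) ^ (∑ i ∈ range n, i))⁻¹ := by
    have htri : B.BlockTriangular id := fun i j h => bb_eq_zero h
    rw [Matrix.det_of_upperTriangular htri]
    have : ∀ i : Fin n, B i i = ((2 : ℚ) ^ (i : ℕ))⁻¹ := fun i => bb_diag i.val
    rw [Finset.prod_congr rfl fun i _ => this i, Finset.prod_inv_distrib]
    congr 1
    rw [Fin.prod_univ_eq_prod_range (fun i => (2 : ℚ) ^ i) n, Finset.prod_pow_eq_pow_sum]
  rw [hdA, hdB]
  have hgauss : (∑ i ∈ range n, i) + (∑ i ∈ range n, i) = n * (n - 1) := by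
    have := Finset.sum_range_id_mul_two n
    omega
  have hz : (2 : ℚ) ^ (-((n * (n - 1) : ℕ) : ℤ)) = ((2 : ℚ) ^ (n * (n - 1)))⁻¹ := by
    rw [_root_.zpow_neg, zpow_natCast]
  rw [hz, ← hgauss, pow_add]
  have h2 : ((2 : ℚ) ^ (∑ i ∈ range n, i)) ≠ 0 := by positivity
  field_simp
  ring
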